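/- Let A be a nonempty Γ-invariant central hyperplane arrangement defined over L. For every q ∈ ℤ_{>0}, χ_{A,q} = Σ_{C ∈ C_T} (1/#Γ(C)) · Ind_{Γ_C}^Γ χ_{C,q} = Σ_{i=1}^k Ind_{Γ_{C_i}}^Γ χ_{C_i,q}, where {C_1, …, C_k} is a set of representatives of the Γ-orbits of C_T. -/

import Mathlib

open Matrix

/-- The lattice `L = ℤ^ℓ` sitting inside `L_ℝ = ℝ^ℓ`. -/
def intLattice (ℓ : ℕ) : AddSubgroup (Fin ℓ → ℝ) :=
  AddSubgroup.pi Set.univ fun _ => AddSubgroup.zmultiples (1 : ℝ)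

/-- The `ℓ`-torus `T = L_ℝ / L`. -/
abbrev Torus (ℓ : ℕ) := (Fin ℓ → ℝ) ⧸ intLattice ℓ

/-- The natural projection `π_T : L_ℝ → T`. -/
abbrev pT (ℓ : ℕ) : (Fin ℓ → ℝ) →+ Torus ℓ := QuotientAddGroup.mk' (intLattice ℓ)

/-- The complement `M(A^aff)` of the integral translates of the arrangement. -/
def Maff {ℓ n : ℕ} (α : Fin n → Fin ℓ → ℤ) : Set (Fin ℓ → ℝ) :=
  {x | ∀ (i : Fin n) (k : ℤ), x ⬝ᵥ (fun j => ((α i j : ℤ) : ℝ)) ≠ (k : ℝ)}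

/-- The complement `T(A) = π_T(M(A^aff))` of the arrangement in the torus. -/
def TA {ℓ n : ℕ} (α : Fin n → Fin ℓ → ℤ) : Set (Torus ℓ) := pT ℓ '' Maff α

/-- `C` is a connected component ("chamber") of `T(A)`. -/
def IsChamberT {ℓ n : ℕ} (α : Fin n → Fin ℓ → ℤ) (C : Set (Torus ℓ)) : Prop :=
  ∃ t ∈ TA α, C = connectedComponentIn (TA α) t

/-- The image of a subset of the torus under the map induced by the real matrix `R`. -/
def tAct {ℓ : ℕ} (R : Matrix (Fin ℓ) (Fin ℓ) ℝ) (C : Set (Torus ℓ)) : Set (Torus ℓ) :=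
  pT ℓ '' ((fun x => x ᵥ* R) '' (pT ℓ ⁻¹' C))

/-- The real matrix of `ρ(γ)`. -/
def realMat {ℓ : ℕ} {Γ : Type*} [Group Γ]
    (ρ : Γ →* Matrix.GeneralLinearGroup (Fin ℓ) ℤ) (γ : Γ) : Matrix (Fin ℓ) (Fin ℓ) ℝ :=
  ((ρ γ : Matrix (Fin ℓ) (Fin ℓ) ℤ)).map (Int.cast : ℤ → ℝ)

/-- `χ_{C,q}(γ)`: the number of points of `C ∩ T[q]` fixed by the transformation of the torus
induced by `ρ(γ)`. -/
noncomputable def chamberChar {ℓ : ℕ} {Γ : Type*} [Group Γ]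
    (ρ : Γ →* Matrix.GeneralLinearGroup (Fin ℓ) ℤ)
    (C : Set (Torus ℓ)) (q : ℕ) (γ : Γ) : ℕ :=
  Nat.card {t : Torus ℓ // t ∈ C ∧ q • t = 0 ∧
    ∃ x : Fin ℓ → ℝ, t = pT ℓ x ∧ pT ℓ (x ᵥ* realMat ρ γ) = t}

/-- The value at `γ` of the induced character `Ind_{Γ_C}^Γ χ_{C,q}`, where
`Γ_C = {δ : ρ_T(δ)(C) = C}` is the isotropy subgroup of the chamber `C`:
`(Ind_{Γ_C}^Γ χ_{C,q})(γ) = (1/#Γ_C) Σ_{σ ∈ Γ, σ⁻¹γσ ∈ Γ_C} χ_{C,q}(σ⁻¹γσ)`. -/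
noncomputable def indCharVal {ℓ : ℕ} {Γ : Type*} [Group Γ] [Fintype Γ]
    (ρ : Γ →* Matrix.GeneralLinearGroup (Fin ℓ) ℤ)
    (C : Set (Torus ℓ)) (q : ℕ) (γ : Γ) : ℂ :=
  ((Nat.card {δ : Γ // tAct (realMat ρ δ) C = C} : ℂ))⁻¹ *
    ∑ᶠ σ : {σ : Γ // tAct (realMat ρ (σ⁻¹ * γ * σ)) C = C},
      (chamberChar ρ C q ((σ : Γ)⁻¹ * γ * (σ : Γ)) : ℂ)


open Matrix
section
variable {ℓ n : ℕ} (α : Fin n → Fin ℓ → ℤ)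

noncomputable section

def αr (i : Fin n) : Fin ℓ → ℝ := fun j => ((α i j : ℤ) : ℝ)

def region (k : Fin n → ℤ) : Set (Fin ℓ → ℝ) :=
  {x | ∀ i, ((k i : ℝ) < x ⬝ᵥ αr α i ∧ x ⬝ᵥ αr α i < (k i : ℝ) + 1)}

def flr (x : Fin ℓ → ℝ) : Fin n → ℤ := fun i => ⌊x ⬝ᵥ αr α i⌋

lemma mem_intLattice {x : Fin ℓ → ℝ} :
    x ∈ intLattice ℓ ↔ ∀ j, ∃ m : ℤ, (m : ℝ) = x j := by
  simp [intLattice, AddSubgroup.mem_pi, AddSubgroup.mem_zmultiples_iff]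

lemma pT_eq {x y : Fin ℓ → ℝ} : pT ℓ x = pT ℓ y ↔ y - x ∈ intLattice ℓ := by
  rw [QuotientAddGroup.mk'_eq_mk']
  constructor
  · rintro ⟨z, hz, h⟩
    have : y - x = z := by rw [← h]; abel
    rwa [this]
  · intro h; exact ⟨y - x, h, by abel⟩

lemma lattice_dot {x : Fin ℓ → ℝ} (hx : x ∈ intLattice ℓ) (i : Fin n) :
    ∃ m : ℤ, x ⬝ᵥ αr α i = (m : ℝ) := by
  rw [mem_intLattice] at hx
  choose m hm using hx
  refine ⟨∑ j, m j * α i j, ?_⟩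
  simp only [dotProduct, αr]
  push_cast
  exact Finset.sum_congr rfl fun j _ => by rw [hm j]

lemma region_subset_Maff (k : Fin n → ℤ) : region α k ⊆ Maff α := by
  intro x hx i m hm
  have h := hx i
  rw [show (fun j => ((α i j : ℤ) : ℝ)) = αr α i from rfl] at hm
  rw [hm] at h
  have h1 : k i < m := by exact_mod_cast h.1
  have h2 : (m : ℝ) < k i + 1 := h.2
  have h2' : m < k i + 1 := by exact_mod_cast h2
  omega

lemma mem_region_flr {x : Fin ℓ → ℝ} (hx : x ∈ Maff α) : x ∈ region α (flr α x) := by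
  intro i
  constructor
  · rcases lt_or_eq_of_le (Int.floor_le (x ⬝ᵥ αr α i)) with h | h
    · exact h
    · exact absurd h.symm (hx i ⌊x ⬝ᵥ αr α i⌋)
  · exact Int.lt_floor_add_one _

lemma flr_eq_of_mem_region {x : Fin ℓ → ℝ} {k : Fin n → ℤ} (hx : x ∈ region α k) :
    flr α x = k := by
  funext i
  have h := hx i
  have : ⌊x ⬝ᵥ αr α i⌋ = k i := by
    rw [Int.floor_eq_iff]
    exact ⟨h.1.le, h.2⟩
  exact this

lemma continuous_dot (v : Fin ℓ → ℝ) : Continuous fun x : Fin ℓ → ℝ => x ⬝ᵥ v := by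
  simp only [dotProduct]
  exact continuous_finset_sum _ fun j _ => (continuous_apply j).mul continuous_const

lemma region_open (k : Fin n → ℤ) : IsOpen (region α k) := by
  have : region α k = ⋂ i, ((fun x => x ⬝ᵥ αr α i) ⁻¹' Set.Ioo (k i : ℝ) ((k i : ℝ) + 1)) := by
    ext x; simp [region, Set.mem_Ioo]
  rw [this]
  exact isOpen_iInter_of_finite fun i => (isOpen_Ioo).preimage (continuous_dot _)

lemma convcomb_lt {a b X Y c : ℝ} (ha : 0 ≤ a) (hb : 0 ≤ b) (hab : a + b = 1)
    (h1 : c < X) (h2 : c < Y) : c < a * X + b * Y := by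
  rcases ha.eq_or_lt with h | h
  · subst h; simp at hab ⊢; rw [hab]; simpa using h2
  · have hc : c = a * c + b * c := by rw [← add_mul, hab, one_mul]
    rw [hc]
    have := mul_lt_mul_of_pos_left h1 h
    have := mul_le_mul_of_nonneg_left h2.le hb
    linarith

lemma convcomb_lt' {a b X Y c : ℝ} (ha : 0 ≤ a) (hb : 0 ≤ b) (hab : a + b = 1)
    (h1 : X < c) (h2 : Y < c) : a * X + b * Y < c := by
  have := convcomb_lt ha hb hab (neg_lt_neg h1) (neg_lt_neg h2)
  nlinarith

lemma region_convex (k : Fin n → ℤ) : Convex ℝ (region α k) := by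
  intro x hx y hy a b ha hb hab
  intro i
  have h1 := hx i; have h2 := hy i
  have : (a • x + b • y) ⬝ᵥ αr α i = a * (x ⬝ᵥ αr α i) + b * (y ⬝ᵥ αr α i) := by
    rw [add_dotProduct, smul_dotProduct, smul_dotProduct]; simp [smul_eq_mul]
  rw [this]
  exact ⟨convcomb_lt ha hb hab h1.1 h2.1, convcomb_lt' ha hb hab h1.2 h2.2⟩

end
end
section
variable {ℓ n : ℕ} (α : Fin n → Fin ℓ → ℤ)

lemma continuous_pT : Continuous (pT ℓ) := continuous_quot_mk

lemma add_lattice_dot {x lam : Fin ℓ → ℝ} (i : Fin n) :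
    (x + lam) ⬝ᵥ αr α i = x ⬝ᵥ αr α i + lam ⬝ᵥ αr α i := add_dotProduct x lam _

lemma piece_subset_of_pT_eq {x y : Fin ℓ → ℝ} {k k' : Fin n → ℤ}
    (hxy : pT ℓ x = pT ℓ y) (hx : x ∈ region α k) (hy : y ∈ region α k') :
    pT ℓ '' region α k ⊆ pT ℓ '' region α k' := by
  have hlam : y - x ∈ intLattice ℓ := (pT_eq).1 hxy
  choose m hm using lattice_dot α hlam
  have hk' : ∀ i, k' i = k i + m i := by
    intro i
    have h1 := hx i
    have h2 := hy i
    have hyx : y ⬝ᵥ αr α i = x ⬝ᵥ αr α i + (m i : ℝ) := by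
      have : y = x + (y - x) := by abel
      rw [this, add_lattice_dot, hm i]
    rw [hyx] at h2
    have c1 : (k i : ℝ) < x ⬝ᵥ αr α i := h1.1
    have c2 : x ⬝ᵥ αr α i < (k i : ℝ) + 1 := h1.2
    have c3 : (k' i : ℝ) - m i < x ⬝ᵥ αr α i := by linarith [h2.1]
    have c4 : x ⬝ᵥ αr α i < (k' i : ℝ) - m i + 1 := by linarith [h2.2]
    have d1 : (k i : ℝ) < (k' i : ℝ) - m i + 1 := by linarith
    have d2 : (k' i : ℝ) - m i < (k i : ℝ) + 1 := by linarith
    have e1 : (k i : ℤ) < k' i - m i + 1 := by exact_mod_cast d1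
    have e2 : (k' i : ℤ) - m i < k i + 1 := by exact_mod_cast d2
    omega
  rintro t ⟨z, hz, rfl⟩
  refine ⟨z + (y - x), ?_, ?_⟩
  · intro i
    have h := hz i
    rw [add_lattice_dot, hm i, hk' i]
    push_cast
    constructor <;> linarith [h.1, h.2]
  · rw [pT_eq]
    have : z - (z + (y - x)) = x - y := by abel
    rw [this]
    have := neg_mem hlam
    rwa [neg_sub] at this

lemma piece_eq_of_pT_eq {x y : Fin ℓ → ℝ} {k k' : Fin n → ℤ}
    (hxy : pT ℓ x = pT ℓ y) (hx : x ∈ region α k) (hy : y ∈ region α k') :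
    pT ℓ '' region α k = pT ℓ '' region α k' :=
  subset_antisymm (piece_subset_of_pT_eq α hxy hx hy) (piece_subset_of_pT_eq α hxy.symm hy hx)

lemma piece_open (k : Fin n → ℤ) : IsOpen (pT ℓ '' region α k) :=
  QuotientAddGroup.isOpenMap_coe _ (region_open α k)

lemma piece_preconnected (k : Fin n → ℤ) : IsPreconnected (pT ℓ '' region α k) :=
  ((region_convex α k).isPreconnected).image _ (continuous_pT).continuousOn

lemma subset_region_of_preconnected {S : Set (Fin ℓ → ℝ)} (hS : IsPreconnected S)
    (hSM : S ⊆ Maff α) {y : Fin ℓ → ℝ} (hy : y ∈ S) : S ⊆ region α (flr α y) := by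
  set P := region α (flr α y) with hP
  set Q := ⋃ k ∈ {k : Fin n → ℤ | k ≠ flr α y}, region α k with hQ
  have hQopen : IsOpen Q := isOpen_biUnion fun k _ => region_open α k
  have hcover : S ⊆ P ∪ Q := by
    intro z hz
    by_cases h : flr α z = flr α y
    · left; rw [hP, ← h]; exact mem_region_flr α (hSM hz)
    · right; exact Set.mem_biUnion h (mem_region_flr α (hSM hz))
  by_contra hnot
  rw [Set.not_subset] at hnot
  obtain ⟨s, hsS, hsP⟩ := hnot
  have hsQ : s ∈ Q := (hcover hsS).resolve_left hsP
  have hSP : (S ∩ P).Nonempty := ⟨y, hy, mem_region_flr α (hSM hy)⟩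
  have hSQ : (S ∩ Q).Nonempty := ⟨s, hsS, hsQ⟩
  obtain ⟨w, hwS, hwP, hwQ⟩ := hS P Q (region_open α _) hQopen hcover hSP hSQ
  obtain ⟨k, hk, hwk⟩ := Set.mem_iUnion₂.1 hwQ
  exact hk ((flr_eq_of_mem_region α hwk).symm.trans (flr_eq_of_mem_region α hwP))

lemma compIn_eq_piece {x : Fin ℓ → ℝ} (hx : x ∈ Maff α) :
    connectedComponentIn (TA α) (pT ℓ x) = pT ℓ '' region α (flr α x) := by
  set P := pT ℓ '' region α (flr α x) with hP
  have hPsub : P ⊆ TA α := Set.image_mono (region_subset_Maff α _)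
  have htP : pT ℓ x ∈ P := ⟨x, mem_region_flr α hx, rfl⟩
  apply subset_antisymm
  · set Q := ⋃ k ∈ {k : Fin n → ℤ | pT ℓ '' region α k ≠ P}, pT ℓ '' region α k with hQ
    have hQopen : IsOpen Q := isOpen_biUnion fun k _ => piece_open α k
    have hcover : TA α ⊆ P ∪ Q := by
      rintro t ⟨y, hy, rfl⟩
      by_cases h : pT ℓ '' region α (flr α y) = P
      · left; rw [← h]; exact ⟨y, mem_region_flr α hy, rfl⟩
      · right; exact Set.mem_biUnion h ⟨y, mem_region_flr α hy, rfl⟩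
    have hPQ : ∀ t, t ∈ P → t ∈ Q → False := by
      rintro t ⟨z, hz, rfl⟩ htQ
      obtain ⟨k, hk, w, hw, hww⟩ := Set.mem_iUnion₂.1 htQ
      exact hk (piece_eq_of_pT_eq α hww hw hz)
    set S := connectedComponentIn (TA α) (pT ℓ x) with hS
    have hSsub : S ⊆ TA α := connectedComponentIn_subset _ _
    have hSconn : IsPreconnected S := isPreconnected_connectedComponentIn
    have hxS : pT ℓ x ∈ S := mem_connectedComponentIn (hPsub htP)
    intro t htS
    by_contra htP'
    have htQ : t ∈ Q := (hcover (hSsub htS)).resolve_left htP'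
    obtain ⟨w, hwS, hwP, hwQ⟩ := hSconn P Q (piece_open α _) hQopen
      (hSsub.trans hcover) ⟨pT ℓ x, hxS, htP⟩ ⟨t, htS, htQ⟩
    exact hPQ w hwP hwQ
  · exact (piece_preconnected α _).subset_connectedComponentIn htP hPsub

lemma isChamberT_iff {C : Set (Torus ℓ)} :
    IsChamberT α C ↔ ∃ x ∈ Maff α, C = pT ℓ '' region α (flr α x) := by
  constructor
  · rintro ⟨t, ⟨x, hx, rfl⟩, rfl⟩
    exact ⟨x, hx, compIn_eq_piece α hx⟩
  · rintro ⟨x, hx, rfl⟩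
    exact ⟨pT ℓ x, ⟨x, hx, rfl⟩, (compIn_eq_piece α hx).symm⟩

lemma chamber_eq_compIn {C : Set (Torus ℓ)} (hC : IsChamberT α C) {t : Torus ℓ} (ht : t ∈ C) :
    C = connectedComponentIn (TA α) t := by
  obtain ⟨x, hx, rfl⟩ := (isChamberT_iff α).1 hC
  obtain ⟨z, hz, rfl⟩ := ht
  have hzM : z ∈ Maff α := region_subset_Maff α _ hz
  rw [compIn_eq_piece α hzM, flr_eq_of_mem_region α hz]

lemma chamber_subset_TA {C : Set (Torus ℓ)} (hC : IsChamberT α C) : C ⊆ TA α := by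
  obtain ⟨x, hx, rfl⟩ := (isChamberT_iff α).1 hC
  exact Set.image_mono (region_subset_Maff α _)

end
section
variable {ℓ n : ℕ} (α : Fin n → Fin ℓ → ℤ) {Γ : Type*} [Group Γ]
  (ρ : Γ →* Matrix.GeneralLinearGroup (Fin ℓ) ℤ)

def mulRhom (γ : Γ) : (Fin ℓ → ℝ) →+ (Fin ℓ → ℝ) :=
  AddMonoidHom.mk' (fun x => x ᵥ* realMat ρ γ) (fun a b => add_vecMul (realMat ρ γ) a b)

lemma lattice_vecMul (γ : Γ) {x : Fin ℓ → ℝ} (hx : x ∈ intLattice ℓ) :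
    x ᵥ* realMat ρ γ ∈ intLattice ℓ := by
  rw [mem_intLattice] at hx ⊢
  choose m hm using hx
  intro j
  refine ⟨∑ i, m i * (ρ γ : Matrix (Fin ℓ) (Fin ℓ) ℤ) i j, ?_⟩
  simp only [Matrix.vecMul, dotProduct, realMat, Matrix.map_apply]
  push_cast
  exact Finset.sum_congr rfl fun i _ => by rw [hm i]

noncomputable def actHom (γ : Γ) : Torus ℓ →+ Torus ℓ :=
  QuotientAddGroup.map _ _ (mulRhom ρ γ) (fun x hx => lattice_vecMul ρ γ hx)

lemma actHom_mk (γ : Γ) (x : Fin ℓ → ℝ) :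
    actHom ρ γ (pT ℓ x) = pT ℓ (x ᵥ* realMat ρ γ) := rfl

lemma realMat_mul (σ δ : Γ) : realMat ρ (σ * δ) = realMat ρ σ * realMat ρ δ := by
  have : realMat ρ (σ * δ) =
      ((ρ σ : Matrix (Fin ℓ) (Fin ℓ) ℤ) * (ρ δ : Matrix (Fin ℓ) (Fin ℓ) ℤ)).map
        (Int.castRingHom ℝ) := by
    simp only [realMat, _root_.map_mul, Units.val_mul]; rfl
  rw [this, Matrix.map_mul]; rfl

lemma realMat_one : realMat (ℓ := ℓ) ρ 1 = 1 := by
  have h1 : (ρ 1 : Matrix (Fin ℓ) (Fin ℓ) ℤ) = 1 := by rw [_root_.map_one]; rfl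
  rw [realMat, h1]
  exact Matrix.map_one _ (by simp) (by simp)

lemma actHom_actHom (σ δ : Γ) (t : Torus ℓ) :
    actHom ρ δ (actHom ρ σ t) = actHom ρ (σ * δ) t := by
  induction t using QuotientAddGroup.induction_on with
  | H x =>
    show actHom ρ δ (actHom ρ σ (pT ℓ x)) = actHom ρ (σ * δ) (pT ℓ x)
    rw [actHom_mk, actHom_mk, actHom_mk, Matrix.vecMul_vecMul, realMat_mul]

lemma actHom_one (t : Torus ℓ) : actHom ρ 1 t = t := by
  induction t using QuotientAddGroup.induction_on with
  | H x =>
    show actHom ρ 1 (pT ℓ x) = pT ℓ x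
    rw [actHom_mk, realMat_one, Matrix.vecMul_one]

lemma actHom_cancel (γ : Γ) (t : Torus ℓ) : actHom ρ γ⁻¹ (actHom ρ γ t) = t := by
  rw [actHom_actHom, mul_inv_cancel, actHom_one]

lemma actHom_cancel' (γ : Γ) (t : Torus ℓ) : actHom ρ γ (actHom ρ γ⁻¹ t) = t := by
  rw [actHom_actHom, inv_mul_cancel, actHom_one]

lemma actHom_injective (γ : Γ) : Function.Injective (actHom ρ γ) := by
  intro a b h
  have := congrArg (actHom ρ γ⁻¹) h
  rwa [actHom_cancel, actHom_cancel] at this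

lemma pT_surjective : Function.Surjective (pT ℓ) := QuotientAddGroup.mk'_surjective _

lemma tAct_eq (γ : Γ) (C : Set (Torus ℓ)) :
    tAct (realMat ρ γ) C = actHom ρ γ '' C := by
  unfold tAct
  rw [← Set.image_comp]
  have : (pT ℓ) ∘ (fun x => x ᵥ* realMat ρ γ) = (actHom ρ γ) ∘ (pT ℓ) := by
    funext x; exact (actHom_mk ρ γ x).symm
  rw [this, Set.image_comp, Set.image_preimage_eq C (pT_surjective)]

lemma aImg_aImg (a b : Γ) (C : Set (Torus ℓ)) :
    actHom ρ a '' (actHom ρ b '' C) = actHom ρ (b * a) '' C := by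
  rw [← Set.image_comp]
  exact Set.image_congr fun t _ => actHom_actHom ρ b a t

lemma aImg_one (C : Set (Torus ℓ)) : actHom ρ 1 '' C = C := by
  ext t
  constructor
  · rintro ⟨s, hs, rfl⟩; rwa [actHom_one]
  · intro ht; exact ⟨t, ht, actHom_one ρ t⟩

lemma aImg_inj (γ : Γ) {C D : Set (Torus ℓ)} (h : actHom ρ γ '' C = actHom ρ γ '' D) :
    C = D := by
  have := congrArg (Set.image (actHom ρ γ⁻¹)) h
  rwa [aImg_aImg, aImg_aImg, mul_inv_cancel, aImg_one, aImg_one] at this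

end
section
variable {ℓ n : ℕ} (α : Fin n → Fin ℓ → ℤ) {Γ : Type*} [Group Γ]
  (ρ : Γ →* Matrix.GeneralLinearGroup (Fin ℓ) ℤ)

lemma cast_mulVec (M : Matrix (Fin ℓ) (Fin ℓ) ℤ) (v : Fin ℓ → ℤ) :
    (M.map (Int.cast : ℤ → ℝ)) *ᵥ (fun j => ((v j : ℤ) : ℝ)) = fun l => (((M *ᵥ v) l : ℤ) : ℝ) := by
  funext l
  simp only [Matrix.mulVec, dotProduct, Matrix.map_apply]
  push_cast
  rfl

variable (hinv : ∀ (γ : Γ) (i : Fin n), ∃ j : Fin n,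
      ((↑(ρ γ)⁻¹ : Matrix (Fin ℓ) (Fin ℓ) ℤ) *ᵥ α i = α j) ∨
      ((↑(ρ γ)⁻¹ : Matrix (Fin ℓ) (Fin ℓ) ℤ) *ᵥ α i = -α j))

lemma continuous_vecMulR (M : Matrix (Fin ℓ) (Fin ℓ) ℝ) :
    Continuous fun z : Fin ℓ → ℝ => z ᵥ* M := by
  apply continuous_pi
  intro j
  simp only [Matrix.vecMul, dotProduct]
  exact continuous_finset_sum _ fun i _ => (continuous_apply i).mul continuous_const

include hinv

lemma act_dot (γ : Γ) (i : Fin n) : ∃ j : Fin n,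
    (∀ x : Fin ℓ → ℝ, (x ᵥ* realMat ρ γ) ⬝ᵥ αr α i = x ⬝ᵥ αr α j) ∨
    (∀ x : Fin ℓ → ℝ, (x ᵥ* realMat ρ γ) ⬝ᵥ αr α i = -(x ⬝ᵥ αr α j)) := by
  obtain ⟨j, hj⟩ := hinv γ⁻¹ i
  have hmat : (↑(ρ γ⁻¹)⁻¹ : Matrix (Fin ℓ) (Fin ℓ) ℤ) = (ρ γ : Matrix (Fin ℓ) (Fin ℓ) ℤ) := by
    rw [← _root_.map_inv, inv_inv]
  rw [hmat] at hj
  refine ⟨j, ?_⟩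
  rcases hj with hj | hj
  · left
    intro x
    rw [← Matrix.dotProduct_mulVec]
    have : realMat ρ γ *ᵥ αr α i = αr α j := by
      rw [realMat, show αr α i = fun l => (((α i l : ℤ)) : ℝ) from rfl, cast_mulVec, hj]; rfl
    rw [this]
  · right
    intro x
    rw [← Matrix.dotProduct_mulVec]
    have : realMat ρ γ *ᵥ αr α i = fun l => -(αr α j l) := by
      rw [realMat, show αr α i = fun l => (((α i l : ℤ)) : ℝ) from rfl, cast_mulVec, hj]
      funext l; simp [αr]
    rw [this, show (fun l => -(αr α j l)) = -(αr α j) from rfl, dotProduct_neg]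

lemma Maff_vecMul (γ : Γ) {x : Fin ℓ → ℝ} (hx : x ∈ Maff α) :
    x ᵥ* realMat ρ γ ∈ Maff α := by
  intro i m hm
  obtain ⟨j, hj | hj⟩ := act_dot α ρ hinv γ i
  · rw [show (fun j_1 => ((α i j_1 : ℤ) : ℝ)) = αr α i from rfl, hj x] at hm
    exact hx j m hm
  · rw [show (fun j_1 => ((α i j_1 : ℤ) : ℝ)) = αr α i from rfl, hj x] at hm
    have : x ⬝ᵥ αr α j = ((-m : ℤ) : ℝ) := by push_cast; linarith
    exact hx j (-m) this

lemma vecMul_image_region_subset (γ : Γ) {x : Fin ℓ → ℝ} (hx : x ∈ Maff α) :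
    (fun z => z ᵥ* realMat ρ γ) '' region α (flr α x) ⊆
      region α (flr α (x ᵥ* realMat ρ γ)) := by
  apply subset_region_of_preconnected α
  · exact ((region_convex α _).isPreconnected).image _ (continuous_vecMulR _).continuousOn
  · rintro z ⟨w, hw, rfl⟩
    exact Maff_vecMul α ρ hinv γ (region_subset_Maff α _ hw)
  · exact ⟨x, mem_region_flr α hx, rfl⟩

lemma vecMul_image_region (γ : Γ) {x : Fin ℓ → ℝ} (hx : x ∈ Maff α) :
    (fun z => z ᵥ* realMat ρ γ) '' region α (flr α x) =
      region α (flr α (x ᵥ* realMat ρ γ)) := by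
  apply subset_antisymm (vecMul_image_region_subset α ρ hinv γ hx)
  have hxR : x ᵥ* realMat ρ γ ∈ Maff α := Maff_vecMul α ρ hinv γ hx
  have h2 := vecMul_image_region_subset α ρ hinv γ⁻¹ hxR
  have hcan : ∀ z : Fin ℓ → ℝ, (z ᵥ* realMat ρ γ) ᵥ* realMat ρ γ⁻¹ = z := by
    intro z
    rw [Matrix.vecMul_vecMul, ← realMat_mul, mul_inv_cancel, realMat_one, Matrix.vecMul_one]
  rw [hcan x] at h2
  intro t ht
  have := h2 ⟨t, ht, rfl⟩
  refine ⟨t ᵥ* realMat ρ γ⁻¹, this, ?_⟩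
  show (t ᵥ* realMat ρ γ⁻¹) ᵥ* realMat ρ γ = t
  rw [Matrix.vecMul_vecMul, ← realMat_mul, inv_mul_cancel, realMat_one, Matrix.vecMul_one]

lemma aImg_piece (γ : Γ) {x : Fin ℓ → ℝ} (hx : x ∈ Maff α) :
    actHom ρ γ '' (pT ℓ '' region α (flr α x)) =
      pT ℓ '' region α (flr α (x ᵥ* realMat ρ γ)) := by
  rw [← vecMul_image_region α ρ hinv γ hx, ← Set.image_comp, ← Set.image_comp]
  apply Set.image_congr
  intro z _
  exact actHom_mk ρ γ z

lemma aImg_chamber (γ : Γ) {C : Set (Torus ℓ)} (hC : IsChamberT α C) :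
    IsChamberT α (actHom ρ γ '' C) := by
  obtain ⟨x, hx, rfl⟩ := (isChamberT_iff α).1 hC
  rw [aImg_piece α ρ hinv γ hx]
  exact (isChamberT_iff α).2 ⟨x ᵥ* realMat ρ γ, Maff_vecMul α ρ hinv γ hx, rfl⟩

end
section
variable {ℓ n : ℕ} (α : Fin n → Fin ℓ → ℤ) {Γ : Type*} [Group Γ]
  (ρ : Γ →* Matrix.GeneralLinearGroup (Fin ℓ) ℤ)
  (q : ℕ) [NeZero q]

noncomputable def phiv (x : Fin ℓ → ZMod q) : Fin ℓ → ℝ := fun j => ((x j).val : ℝ) / q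

noncomputable def phi (x : Fin ℓ → ZMod q) : Torus ℓ := pT ℓ (phiv q x)

lemma val_cast_self (a : ZMod q) : ((a.val : ℕ) : ZMod q) = a := ZMod.natCast_rightInverse a

lemma qpos : 0 < q := Nat.pos_of_ne_zero (NeZero.ne q)

lemma phi_inj : Function.Injective (phi (ℓ := ℓ) q) := by
  intro x y h
  have h' := (pT_eq).1 h
  rw [mem_intLattice] at h'
  funext j
  obtain ⟨m, hm⟩ := h' j
  have hq : (0 : ℝ) < q := by exact_mod_cast qpos q
  have hxv : ((x j).val : ℝ) < q := by exact_mod_cast ZMod.val_lt (x j)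
  have hyv : ((y j).val : ℝ) < q := by exact_mod_cast ZMod.val_lt (y j)
  have hx0 : (0 : ℝ) ≤ ((x j).val : ℝ) := by positivity
  have hy0 : (0 : ℝ) ≤ ((y j).val : ℝ) := by positivity
  have hsub : (phiv q y - phiv q x) j = (((y j).val : ℝ) - ((x j).val : ℝ)) / q := by
    simp [phiv, sub_div]
  rw [hsub] at hm
  rw [eq_div_iff (ne_of_gt hq)] at hm
  have hmq : (m : ℝ) * q = ((y j).val : ℝ) - ((x j).val : ℝ) := hm
  have hlt : (-1 : ℝ) < m ∧ (m : ℝ) < 1 := by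
    constructor <;> nlinarith
  have hm0 : m = 0 := by
    have h1 : (-1 : ℤ) < m := by exact_mod_cast hlt.1
    have h2 : m < 1 := by exact_mod_cast hlt.2
    omega
  rw [hm0] at hmq
  have : ((y j).val : ℝ) = ((x j).val : ℝ) := by push_cast at hmq; linarith
  have hval : (y j).val = (x j).val := by exact_mod_cast this
  rw [← val_cast_self q (x j), ← val_cast_self q (y j), hval]

lemma phi_torsion (x : Fin ℓ → ZMod q) : q • phi q x = 0 := by
  rw [phi, ← map_nsmul, QuotientAddGroup.mk'_apply, QuotientAddGroup.eq_zero_iff]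
  rw [mem_intLattice]
  intro j
  refine ⟨(x j).val, ?_⟩
  have hq : (q : ℝ) ≠ 0 := by exact_mod_cast (qpos q).ne'
  simp [phiv]
  field_simp

lemma phi_surj_torsion {t : Torus ℓ} (ht : q • t = 0) : ∃ x, phi q x = t := by
  obtain ⟨y, rfl⟩ := pT_surjective (ℓ := ℓ) t
  rw [← map_nsmul, QuotientAddGroup.mk'_apply, QuotientAddGroup.eq_zero_iff, mem_intLattice] at ht
  choose m hm using ht
  refine ⟨fun j => ((m j : ℤ) : ZMod q), ?_⟩
  rw [phi, pT_eq, mem_intLattice]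
  intro j
  set a : ZMod q := ((m j : ℤ) : ZMod q) with ha
  have hcast : ((a.val : ℤ) : ZMod q) = ((m j : ℤ) : ZMod q) := by
    rw [ha]; push_cast [val_cast_self]; rfl
  have hdvd : (q : ℤ) ∣ (m j - a.val) := by
    rw [← ZMod.intCast_zmod_eq_zero_iff_dvd]
    push_cast
    rw [sub_eq_zero]
    exact_mod_cast hcast.symm
  obtain ⟨c, hc⟩ := hdvd
  refine ⟨c, ?_⟩
  have hq : (q : ℝ) ≠ 0 := by exact_mod_cast (qpos q).ne'
  have hmj : (m j : ℝ) = q * y j := by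
    have := hm j
    simpa using this
  have hval : (phiv q (fun j => ((m j : ℤ) : ZMod q)) j : ℝ) = (a.val : ℝ) / q := by
    simp [phiv, ha]
  show (c : ℝ) = y j - phiv q _ j
  rw [hval]
  have hcR : (m j : ℝ) - (a.val : ℝ) = q * c := by exact_mod_cast congrArg (Int.cast : ℤ → ℝ) hc
  have h3 : ((a.val : ℝ)) / q = y j - c := by
    rw [div_eq_iff hq]
    nlinarith [hcR, hmj]
  rw [h3]
  ring

def Nint (x : Fin ℓ → ZMod q) (i : Fin n) : ℤ := ∑ j, ((x j).val : ℤ) * α i j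

lemma phiv_dot (x : Fin ℓ → ZMod q) (i : Fin n) :
    phiv q x ⬝ᵥ αr α i = ((Nint α q x i : ℤ) : ℝ) / q := by
  simp only [phiv, dotProduct, αr, Nint]
  push_cast
  rw [Finset.sum_div]
  exact Finset.sum_congr rfl fun j _ => by ring

lemma zmod_dot (x : Fin ℓ → ZMod q) (i : Fin n) :
    x ⬝ᵥ (fun j => ((α i j : ℤ) : ZMod q)) = ((Nint α q x i : ℤ) : ZMod q) := by
  simp only [dotProduct, Nint]
  push_cast [val_cast_self]
  rfl

lemma phi_mem_TA (x : Fin ℓ → ZMod q) :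
    phi q x ∈ TA α ↔ ∀ i, x ⬝ᵥ (fun j => ((α i j : ℤ) : ZMod q)) ≠ 0 := by
  have hq : (q : ℝ) ≠ 0 := by exact_mod_cast (qpos q).ne'
  constructor
  · rintro ⟨z, hz, hzphi⟩ i h0
    rw [show phi q x = pT ℓ (phiv q x) from rfl] at hzphi
    rw [zmod_dot, ZMod.intCast_zmod_eq_zero_iff_dvd] at h0
    obtain ⟨c, hc⟩ := h0
    have hlam : phiv q x - z ∈ intLattice ℓ := (pT_eq).1 hzphi
    obtain ⟨m, hm⟩ := lattice_dot α hlam i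
    have : z ⬝ᵥ αr α i = ((c - m : ℤ) : ℝ) := by
      have h1 : (phiv q x - z) ⬝ᵥ αr α i = phiv q x ⬝ᵥ αr α i - z ⬝ᵥ αr α i :=
        sub_dotProduct _ _ _
      rw [hm] at h1
      have h2 : phiv q x ⬝ᵥ αr α i = (c : ℝ) := by
        rw [phiv_dot, hc]; push_cast; field_simp
      push_cast
      linarith [h1, h2]
    exact hz i (c - m) this
  · intro h
    refine ⟨phiv q x, ?_, rfl⟩
    intro i k hk
    rw [show (fun j => ((α i j : ℤ) : ℝ)) = αr α i from rfl, phiv_dot] at hk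
    rw [div_eq_iff hq] at hk
    have : ((Nint α q x i : ℤ) : ℝ) = q * k := by linarith
    have hdvd : (q : ℤ) ∣ Nint α q x i := ⟨k, by exact_mod_cast this⟩
    exact h i (by rw [zmod_dot, ZMod.intCast_zmod_eq_zero_iff_dvd]; exact hdvd)

def Wint (x : Fin ℓ → ZMod q) (γ : Γ) (j : Fin ℓ) : ℤ :=
  ∑ i, ((x i).val : ℤ) * (ρ γ : Matrix (Fin ℓ) (Fin ℓ) ℤ) i j

lemma phiv_vecMul (x : Fin ℓ → ZMod q) (γ : Γ) (j : Fin ℓ) :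
    (phiv q x ᵥ* realMat ρ γ) j = ((Wint ρ q x γ j : ℤ) : ℝ) / q := by
  simp only [phiv, Matrix.vecMul, dotProduct, realMat, Matrix.map_apply, Wint]
  push_cast
  rw [Finset.sum_div]
  exact Finset.sum_congr rfl fun i _ => by ring

lemma zmod_vecMul (x : Fin ℓ → ZMod q) (γ : Γ) (j : Fin ℓ) :
    (x ᵥ* ((ρ γ : Matrix (Fin ℓ) (Fin ℓ) ℤ)).map (Int.cast : ℤ → ZMod q)) j
      = ((Wint ρ q x γ j : ℤ) : ZMod q) := by
  simp only [Matrix.vecMul, dotProduct, Matrix.map_apply, Wint]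
  push_cast [val_cast_self]
  rfl

lemma phi_fixed (x : Fin ℓ → ZMod q) (γ : Γ) :
    actHom ρ γ (phi q x) = phi q x ↔
      x ᵥ* ((ρ γ : Matrix (Fin ℓ) (Fin ℓ) ℤ)).map (Int.cast : ℤ → ZMod q) = x := by
  have hq : (q : ℝ) ≠ 0 := by exact_mod_cast (qpos q).ne'
  rw [phi, actHom_mk, pT_eq, mem_intLattice]
  constructor
  · intro h
    funext j
    obtain ⟨m, hm⟩ := h j
    have hmv : (m : ℝ) = ((x j).val : ℝ) / q - ((Wint ρ q x γ j : ℤ) : ℝ) / q := by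
      rw [hm]
      have := phiv_vecMul ρ q x γ j
      simp only [Pi.sub_apply, this, phiv]
    have hdiff : ((x j).val : ℝ) - ((Wint ρ q x γ j : ℤ) : ℝ) = q * m := by
      rw [← sub_div] at hmv
      rw [eq_div_iff hq] at hmv
      linarith
    have hdvd : (q : ℤ) ∣ ((x j).val : ℤ) - Wint ρ q x γ j := ⟨m, by exact_mod_cast hdiff⟩
    rw [zmod_vecMul]
    have hcast0 : ((((x j).val : ℤ) - Wint ρ q x γ j : ℤ) : ZMod q) = 0 := by
      rw [ZMod.intCast_zmod_eq_zero_iff_dvd]; exact hdvd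
    push_cast at hcast0
    rw [sub_eq_zero] at hcast0
    rw [← hcast0]
    exact_mod_cast val_cast_self q (x j)
  · intro h j
    have hzj : ((Wint ρ q x γ j : ℤ) : ZMod q) = ((x j).val : ℤ) := by
      rw [← zmod_vecMul, h]
      push_cast [val_cast_self]
      rfl
    have hdvd : (q : ℤ) ∣ (((x j).val : ℤ) - Wint ρ q x γ j) := by
      rw [← ZMod.intCast_zmod_eq_zero_iff_dvd]
      push_cast
      rw [sub_eq_zero]
      exact_mod_cast hzj.symm
    obtain ⟨c, hc⟩ := hdvd
    refine ⟨c, ?_⟩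
    have hcR : ((x j).val : ℝ) - ((Wint ρ q x γ j : ℤ) : ℝ) = q * c := by exact_mod_cast hc
    have h1 := phiv_vecMul ρ q x γ j
    show (c : ℝ) = phiv q x j - (phiv q x ᵥ* realMat ρ γ) j
    rw [h1, show phiv q x j = ((x j).val : ℝ) / q from rfl, ← sub_div, hcR,
      mul_div_cancel_left₀ _ hq]

end
section
variable {ℓ n : ℕ} (α : Fin n → Fin ℓ → ℤ) {Γ : Type*} [Group Γ]
  (ρ : Γ →* Matrix.GeneralLinearGroup (Fin ℓ) ℤ)
  (q : ℕ) [NeZero q]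

lemma chambers_finite : {C : Set (Torus ℓ) | IsChamberT α C}.Finite := by
  set B : Fin n → ℤ := fun i => ∑ j, |α i j| with hB
  set K : Set (Fin n → ℤ) := Set.pi Set.univ (fun i => Set.Icc (-(B i)) (B i)) with hK
  have hKfin : K.Finite := Set.Finite.pi fun i => Set.finite_Icc _ _
  apply Set.Finite.subset (hKfin.image (fun k => pT ℓ '' region α k))
  rintro C hC
  obtain ⟨x, hx, rfl⟩ := (isChamberT_iff α).1 hC
  set lam : Fin ℓ → ℝ := fun j => -(⌊x j⌋ : ℝ) with hlamdef
  have hlam : lam ∈ intLattice ℓ := by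
    rw [mem_intLattice]; intro j; exact ⟨-⌊x j⌋, by push_cast [hlamdef]; ring⟩
  set x' : Fin ℓ → ℝ := x + lam with hx'
  have hx'M : x' ∈ Maff α := by
    intro i m hm
    obtain ⟨c, hc⟩ := lattice_dot α hlam i
    rw [show (fun j => ((α i j : ℤ) : ℝ)) = αr α i from rfl] at hm
    rw [hx', add_lattice_dot α i, hc] at hm
    refine hx i (m - c) ?_
    show x ⬝ᵥ αr α i = ((m - c : ℤ) : ℝ)
    push_cast
    linarith
  have hfrac : ∀ j, 0 ≤ x' j ∧ x' j < 1 := by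
    intro j
    have h1 : x' j = x j + -(⌊x j⌋ : ℝ) := rfl
    rw [h1]
    exact ⟨by linarith [Int.floor_le (x j)], by linarith [Int.lt_floor_add_one (x j)]⟩
  refine ⟨flr α x', ?_, ?_⟩
  · intro i _
    have habs : |x' ⬝ᵥ αr α i| ≤ (B i : ℝ) := by
      have h1 : |x' ⬝ᵥ αr α i| ≤ ∑ j, |x' j * αr α i j| := by
        exact Finset.abs_sum_le_sum_abs _ _
      have h2 : ∀ j, |x' j * αr α i j| ≤ |αr α i j| := by
        intro j
        rw [abs_mul]
        have := hfrac j
        have : |x' j| ≤ 1 := by rw [abs_le]; constructor <;> linarith [this.1, this.2]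
        nlinarith [abs_nonneg (αr α i j)]
      have h3 : (B i : ℝ) = ∑ j, |αr α i j| := by
        rw [hB]; push_cast; exact Finset.sum_congr rfl fun j _ => by simp [αr]
      calc |x' ⬝ᵥ αr α i| ≤ ∑ j, |x' j * αr α i j| := h1
        _ ≤ ∑ j, |αr α i j| := Finset.sum_le_sum fun j _ => h2 j
        _ = (B i : ℝ) := h3.symm
    rw [abs_le] at habs
    constructor
    · show -B i ≤ ⌊x' ⬝ᵥ αr α i⌋
      rw [Int.le_floor]; push_cast; exact habs.1
    · have : (flr α x' i : ℝ) ≤ x' ⬝ᵥ αr α i := Int.floor_le _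
      exact_mod_cast le_trans this habs.2
  · exact (piece_eq_of_pT_eq α (by rw [pT_eq]; simpa [hx'] using hlam)
      (mem_region_flr α hx) (mem_region_flr α hx'M)).symm

lemma torsion_finite : {t : Torus ℓ | q • t = 0}.Finite := by
  apply Set.Finite.subset (Set.finite_range (phi (ℓ := ℓ) q))
  intro t ht
  obtain ⟨x, hx⟩ := phi_surj_torsion q ht
  exact ⟨x, hx⟩

lemma fix_iff (γ : Γ) (t : Torus ℓ) :
    (∃ x : Fin ℓ → ℝ, t = pT ℓ x ∧ pT ℓ (x ᵥ* realMat ρ γ) = t) ↔ actHom ρ γ t = t := by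
  constructor
  · rintro ⟨x, rfl, hx⟩; rw [actHom_mk]; exact hx
  · intro h
    obtain ⟨x, rfl⟩ := pT_surjective (ℓ := ℓ) t
    exact ⟨x, rfl, by rw [← actHom_mk]; exact h⟩

/-- The fixed-point set in a chamber. -/
def fixSet (γ : Γ) (C : Set (Torus ℓ)) : Set (Torus ℓ) :=
  {t | t ∈ C ∧ q • t = 0 ∧ actHom ρ γ t = t}

lemma chamberChar_eq (C : Set (Torus ℓ)) (γ : Γ) :
    chamberChar ρ C q γ = Nat.card (fixSet ρ q γ C) := by
  apply Nat.card_congr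
  exact Equiv.subtypeEquivRight fun t => by
    rw [fixSet]
    exact and_congr_right fun _ => and_congr_right fun _ => fix_iff ρ γ t

lemma fixSet_finite (γ : Γ) (C : Set (Torus ℓ)) : (fixSet ρ q γ C).Finite :=
  Set.Finite.subset (torsion_finite q) fun t ht => ht.2.1

lemma card_S_eq (γ : Γ) :
    Nat.card {x : Fin ℓ → ZMod q //
        (∀ i : Fin n, x ⬝ᵥ (fun j => ((α i j : ℤ) : ZMod q)) ≠ 0) ∧
        x ᵥ* (((ρ γ : Matrix (Fin ℓ) (Fin ℓ) ℤ)).map (Int.cast : ℤ → ZMod q)) = x}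
      = Nat.card (fixSet ρ q γ (TA α)) := by
  apply Nat.card_congr
  refine Equiv.ofBijective (fun x => ⟨phi q x.1, (phi_mem_TA α q x.1).2 x.2.1,
    phi_torsion q x.1, (phi_fixed ρ q x.1 γ).2 x.2.2⟩) ⟨?_, ?_⟩
  · intro a b hab
    exact Subtype.ext (phi_inj q (congrArg Subtype.val hab))
  · rintro ⟨t, htTA, httor, htfix⟩
    obtain ⟨x, rfl⟩ := phi_surj_torsion q httor
    exact ⟨⟨x, (phi_mem_TA α q x).1 htTA, (phi_fixed ρ q x γ).1 htfix⟩, rfl⟩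

end
section
open scoped Classical
variable {ℓ n : ℕ} (α : Fin n → Fin ℓ → ℤ) {Γ : Type*} [Group Γ]
  (ρ : Γ →* Matrix.GeneralLinearGroup (Fin ℓ) ℤ)
  (q : ℕ) [NeZero q]

noncomputable def CHF : Finset (Set (Torus ℓ)) := (chambers_finite α).toFinset

lemma mem_CHF {C : Set (Torus ℓ)} : C ∈ CHF α ↔ IsChamberT α C :=
  Set.Finite.mem_toFinset _

noncomputable def aOrb (C : Set (Torus ℓ)) : Finset (Set (Torus ℓ)) :=
  (CHF α).filter (fun D => ∃ δ : Γ, D = actHom ρ δ '' C)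

lemma mem_aOrb {C D : Set (Torus ℓ)} :
    D ∈ aOrb α ρ C ↔ (D ∈ CHF α ∧ ∃ δ : Γ, D = actHom ρ δ '' C) := by
  rw [aOrb, Finset.mem_filter]

lemma card_X_sum (γ : Γ) :
    Nat.card (fixSet ρ q γ (TA α)) = ∑ C ∈ CHF α, chamberChar ρ C q γ := by
  classical
  have hXfin := fixSet_finite ρ q γ (TA α)
  rw [Nat.card_coe_set_eq, Set.ncard_eq_toFinset_card _ hXfin]
  rw [Finset.card_eq_sum_card_fiberwise
    (f := fun t => connectedComponentIn (TA α) t) (t := CHF α) ?_]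
  swap
  · intro t ht
    rw [Finset.mem_coe, Set.Finite.mem_toFinset] at ht
    exact (mem_CHF α).2 ⟨t, ht.1, rfl⟩
  apply Finset.sum_congr rfl
  intro C hC
  have hCch := (mem_CHF α).1 hC
  rw [chamberChar_eq]
  have hset : fixSet ρ q γ C =
      ↑(hXfin.toFinset.filter (fun t => connectedComponentIn (TA α) t = C)) := by
    ext t
    simp only [Finset.coe_filter, Set.mem_setOf_eq, Set.Finite.mem_toFinset, fixSet]
    constructor
    · rintro ⟨htC, htor, hfix⟩
      have htTA : t ∈ TA α := chamber_subset_TA α hCch htC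
      exact ⟨⟨htTA, htor, hfix⟩, (chamber_eq_compIn α hCch htC).symm⟩
    · rintro ⟨⟨htTA, htor, hfix⟩, hcomp⟩
      refine ⟨?_, htor, hfix⟩
      rw [← hcomp]
      exact mem_connectedComponentIn htTA
  rw [hset, Nat.card_coe_set_eq, Set.ncard_coe_finset]

lemma actHom_conj_fix (σ γ : Γ) (t : Torus ℓ) :
    actHom ρ (σ⁻¹ * γ * σ) t = t ↔ actHom ρ γ (actHom ρ σ⁻¹ t) = actHom ρ σ⁻¹ t := by
  have e1 : actHom ρ γ (actHom ρ σ⁻¹ t) = actHom ρ (σ⁻¹ * γ) t := actHom_actHom ρ σ⁻¹ γ t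
  have e2 : ∀ s, actHom ρ σ (actHom ρ (σ⁻¹ * γ) s) = actHom ρ (σ⁻¹ * γ * σ) s :=
    fun s => actHom_actHom ρ (σ⁻¹ * γ) σ s
  have e3 : actHom ρ σ (actHom ρ σ⁻¹ t) = t := actHom_cancel' ρ σ t
  constructor
  · intro h
    rw [e1]
    apply actHom_injective ρ σ
    rw [e2, e3, h]
  · intro h
    rw [e1] at h
    have := congrArg (actHom ρ σ) h
    rw [e2, e3] at this
    exact this

lemma chamberChar_conj (σ γ : Γ) (C : Set (Torus ℓ)) :
    chamberChar ρ C q (σ⁻¹ * γ * σ) = chamberChar ρ (actHom ρ σ⁻¹ '' C) q γ := by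
  rw [chamberChar_eq, chamberChar_eq]
  apply Nat.card_congr
  refine Equiv.ofBijective (fun t => ⟨actHom ρ σ⁻¹ t.1, Set.mem_image_of_mem _ t.2.1, ?_, ?_⟩)
    ⟨?_, ?_⟩
  · show q • actHom ρ σ⁻¹ (t.1 : Torus ℓ) = 0
    rw [← AddMonoidHom.map_nsmul, t.2.2.1, map_zero]
  · exact (actHom_conj_fix ρ σ γ t.1).1 t.2.2.2
  · intro a b h
    exact Subtype.ext (actHom_injective ρ σ⁻¹ (congrArg Subtype.val h))
  · rintro ⟨u, ⟨t, htC, rfl⟩, htor, hfix⟩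
    have htor' : q • t = 0 := by
      have h1 : actHom ρ σ (q • actHom ρ σ⁻¹ t) = actHom ρ σ (0 : Torus ℓ) := by rw [htor]
      rwa [← AddMonoidHom.map_nsmul, actHom_cancel', map_zero] at h1
    exact ⟨⟨t, htC, htor', (actHom_conj_fix ρ σ γ t).2 hfix⟩, rfl⟩

variable (hinv : ∀ (γ : Γ) (i : Fin n), ∃ j : Fin n,
      ((↑(ρ γ)⁻¹ : Matrix (Fin ℓ) (Fin ℓ) ℤ) *ᵥ α i = α j) ∨
      ((↑(ρ γ)⁻¹ : Matrix (Fin ℓ) (Fin ℓ) ℤ) *ᵥ α i = -α j))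

include hinv in
lemma chamberChar_zero (γ : Γ) {C : Set (Torus ℓ)} (hC : IsChamberT α C)
    (h : actHom ρ γ '' C ≠ C) : chamberChar ρ C q γ = 0 := by
  rw [chamberChar_eq]
  have hempty : fixSet ρ q γ C = ∅ := by
    ext t
    simp only [Set.mem_empty_iff_false, iff_false, fixSet, Set.mem_setOf_eq]
    rintro ⟨htC, htor, hfix⟩
    apply h
    have h1 : actHom ρ γ '' C = connectedComponentIn (TA α) t :=
      chamber_eq_compIn α (aImg_chamber α ρ hinv γ hC) ⟨t, htC, hfix⟩
    have h2 : C = connectedComponentIn (TA α) t := chamber_eq_compIn α hC htC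
    rw [h1, ← h2]
  rw [hempty, Nat.card_coe_set_eq, Set.ncard_empty]

lemma orb_symm {C D : Set (Torus ℓ)} :
    (∃ δ : Γ, D = actHom ρ δ '' C) ↔ (∃ δ : Γ, C = actHom ρ δ '' D) := by
  constructor
  · rintro ⟨δ, rfl⟩
    exact ⟨δ⁻¹, by rw [aImg_aImg, mul_inv_cancel, aImg_one]⟩
  · rintro ⟨δ, rfl⟩
    exact ⟨δ⁻¹, by rw [aImg_aImg, mul_inv_cancel, aImg_one]⟩

lemma orb_eq_iff {C D : Set (Torus ℓ)} (h : ∃ δ : Γ, D = actHom ρ δ '' C)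
    (E : Set (Torus ℓ)) :
    (∃ δ : Γ, E = actHom ρ δ '' C) ↔ (∃ δ : Γ, E = actHom ρ δ '' D) := by
  obtain ⟨δ₀, rfl⟩ := h
  constructor
  · rintro ⟨δ, rfl⟩
    refine ⟨δ₀⁻¹ * δ, ?_⟩
    rw [aImg_aImg, show δ₀ * (δ₀⁻¹ * δ) = δ by group]
  · rintro ⟨δ, rfl⟩
    rw [aImg_aImg]
    exact ⟨δ₀ * δ, rfl⟩

lemma aOrb_eq_of_mem {C D : Set (Torus ℓ)} (h : ∃ δ : Γ, D = actHom ρ δ '' C) :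
    aOrb α ρ C = aOrb α ρ D := by
  simp only [aOrb]
  apply Finset.filter_congr
  intro E _
  exact orb_eq_iff ρ h E

include hinv in
lemma card_orbit {C : Set (Torus ℓ)} (hC : IsChamberT α C) :
    Nat.card {D : Set (Torus ℓ) // ∃ δ : Γ, D = tAct (realMat ρ δ) C} = (aOrb α ρ C).card := by
  have h1 : Nat.card {D : Set (Torus ℓ) // ∃ δ : Γ, D = tAct (realMat ρ δ) C}
      = Nat.card {D : Set (Torus ℓ) // ∃ δ : Γ, D = actHom ρ δ '' C} :=
    Nat.card_congr (Equiv.subtypeEquivRight fun D => by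
      constructor
      · rintro ⟨δ, rfl⟩; exact ⟨δ, by rw [tAct_eq]⟩
      · rintro ⟨δ, rfl⟩; exact ⟨δ, by rw [tAct_eq]⟩)
  rw [h1]
  have h2 : {D : Set (Torus ℓ) | ∃ δ : Γ, D = actHom ρ δ '' C} = ↑(aOrb α ρ C) := by
    ext D
    rw [Set.mem_setOf_eq, Finset.mem_coe, mem_aOrb]
    constructor
    · rintro ⟨δ, rfl⟩
      exact ⟨(mem_CHF α).2 (aImg_chamber α ρ hinv δ hC), δ, rfl⟩
    · rintro ⟨-, h⟩
      exact h
  calc Nat.card {D : Set (Torus ℓ) // ∃ δ : Γ, D = actHom ρ δ '' C}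
      = ({D : Set (Torus ℓ) | ∃ δ : Γ, D = actHom ρ δ '' C}).ncard :=
        Nat.card_coe_set_eq _
    _ = (aOrb α ρ C).card := by rw [h2, Set.ncard_coe_finset]

include hinv in
lemma K1 [Fintype Γ] {C : Set (Torus ℓ)} (hC : IsChamberT α C) (γ : Γ) :
    indCharVal ρ C q γ = ∑ D ∈ aOrb α ρ C, (chamberChar ρ D q γ : ℂ) := by
  classical
  rw [indCharVal]
  set Sf := Finset.univ.filter (fun δ : Γ => actHom ρ δ '' C = C) with hSf
  have hcard : Nat.card {δ : Γ // tAct (realMat ρ δ) C = C} = Sf.card := by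
    rw [Nat.card_eq_fintype_card, Fintype.card_subtype]
    congr 1
    apply Finset.filter_congr
    intro δ _
    rw [tAct_eq]
  have hsum : ∑ᶠ σ : {σ : Γ // tAct (realMat ρ (σ⁻¹ * γ * σ)) C = C},
      (chamberChar ρ C q ((σ : Γ)⁻¹ * γ * (σ : Γ)) : ℂ)
      = ∑ σ ∈ Finset.univ.filter (fun σ : Γ => tAct (realMat ρ (σ⁻¹ * γ * σ)) C = C),
        (chamberChar ρ C q (σ⁻¹ * γ * σ) : ℂ) := by
    rw [finsum_eq_sum_of_fintype]
    exact (Finset.sum_subtype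
      (p := fun σ : Γ => tAct (realMat ρ (σ⁻¹ * γ * σ)) C = C)
      (Finset.univ.filter (fun σ : Γ => tAct (realMat ρ (σ⁻¹ * γ * σ)) C = C))
      (fun σ => by simp)
      (fun σ => (chamberChar ρ C q (σ⁻¹ * γ * σ) : ℂ))).symm
  rw [hcard, hsum]
  have hstep1 : ∑ σ ∈ Finset.univ.filter (fun σ : Γ => tAct (realMat ρ (σ⁻¹ * γ * σ)) C = C),
      (chamberChar ρ C q (σ⁻¹ * γ * σ) : ℂ)
      = ∑ σ : Γ, (chamberChar ρ (actHom ρ σ⁻¹ '' C) q γ : ℂ) := by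
    rw [Finset.sum_congr rfl (fun σ _ => by rw [chamberChar_conj ρ q σ γ C])]
    apply Finset.sum_subset (Finset.filter_subset _ _)
    intro σ _ hσ
    have hne : actHom ρ γ '' (actHom ρ σ⁻¹ '' C) ≠ actHom ρ σ⁻¹ '' C := by
      intro heq
      apply hσ
      rw [Finset.mem_filter]
      refine ⟨Finset.mem_univ _, ?_⟩
      rw [tAct_eq]
      rw [aImg_aImg] at heq
      have h2 := congrArg (Set.image (actHom ρ σ)) heq
      rw [aImg_aImg, aImg_aImg, inv_mul_cancel, aImg_one] at h2
      exact h2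
    have hzero := chamberChar_zero α ρ q hinv γ (aImg_chamber α ρ hinv σ⁻¹ hC) hne
    rw [hzero]
    simp
  rw [hstep1, Finset.sum_comp (fun D => (chamberChar ρ D q γ : ℂ))
    (fun σ : Γ => actHom ρ σ⁻¹ '' C)]
  have himg : Finset.univ.image (fun σ : Γ => actHom ρ σ⁻¹ '' C) = aOrb α ρ C := by
    ext D
    rw [Finset.mem_image, mem_aOrb]
    simp only [Finset.mem_univ, true_and]
    constructor
    · rintro ⟨σ, rfl⟩
      exact ⟨(mem_CHF α).2 (aImg_chamber α ρ hinv σ⁻¹ hC), σ⁻¹, rfl⟩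
    · rintro ⟨-, δ, rfl⟩
      exact ⟨δ⁻¹, by rw [inv_inv]⟩
  rw [himg]
  have hfib : ∀ D ∈ aOrb α ρ C,
      (Finset.univ.filter (fun σ : Γ => actHom ρ σ⁻¹ '' C = D)).card = Sf.card := by
    intro D hD
    obtain ⟨-, δ₀, rfl⟩ := (mem_aOrb α ρ).1 hD
    have hcond : ∀ σ : Γ, (actHom ρ σ⁻¹ '' C = actHom ρ δ₀ '' C) ↔
        (actHom ρ (σ⁻¹ * δ₀⁻¹) '' C = C) := by
      intro σ
      constructor
      · intro h
        have := congrArg (Set.image (actHom ρ δ₀⁻¹)) h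
        rw [aImg_aImg, aImg_aImg, mul_inv_cancel, aImg_one] at this
        exact this
      · intro h
        have := congrArg (Set.image (actHom ρ δ₀)) h
        rw [aImg_aImg, show σ⁻¹ * δ₀⁻¹ * δ₀ = σ⁻¹ by group] at this
        exact this
    apply Finset.card_bij (fun σ _ => σ⁻¹ * δ₀⁻¹)
    · intro σ hσ
      rw [Finset.mem_filter] at hσ
      rw [hSf, Finset.mem_filter]
      exact ⟨Finset.mem_univ _, (hcond σ).1 hσ.2⟩
    · intro a _ b _ hab
      have := congrArg (fun x => (x * δ₀)⁻¹) hab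
      simpa using this
    · intro τ hτ
      rw [hSf, Finset.mem_filter] at hτ
      refine ⟨(τ * δ₀)⁻¹, ?_, by group⟩
      rw [Finset.mem_filter]
      refine ⟨Finset.mem_univ _, ?_⟩
      rw [hcond]
      rw [show ((τ * δ₀)⁻¹)⁻¹ * δ₀⁻¹ = τ by group]
      exact hτ.2
  rw [Finset.sum_congr rfl (fun D hD => by rw [hfib D hD])]
  rw [← Finset.smul_sum]
  have hSf1 : (1 : Γ) ∈ Sf := by
    rw [hSf, Finset.mem_filter]
    exact ⟨Finset.mem_univ _, aImg_one ρ C⟩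
  have hne : (Sf.card : ℂ) ≠ 0 := Nat.cast_ne_zero.2 (Finset.card_ne_zero_of_mem hSf1)
  rw [nsmul_eq_mul, inv_mul_cancel_left₀ hne]

end
section
open scoped Classical
variable {ℓ n : ℕ} (α : Fin n → Fin ℓ → ℤ) {Γ : Type*} [Group Γ] [Fintype Γ]
  (ρ : Γ →* Matrix.GeneralLinearGroup (Fin ℓ) ℤ)
  (q : ℕ) [NeZero q]

lemma part1_sum (γ : Γ) :
    ∑ C ∈ CHF α, ((aOrb α ρ C).card : ℂ)⁻¹ * (∑ D ∈ aOrb α ρ C, (chamberChar ρ D q γ : ℂ))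
      = ∑ D ∈ CHF α, (chamberChar ρ D q γ : ℂ) := by
  have h1 : ∀ C : Set (Torus ℓ),
      ((aOrb α ρ C).card : ℂ)⁻¹ * (∑ D ∈ aOrb α ρ C, (chamberChar ρ D q γ : ℂ))
      = ∑ D ∈ CHF α, (if (∃ δ : Γ, D = actHom ρ δ '' C) then
          ((aOrb α ρ C).card : ℂ)⁻¹ * (chamberChar ρ D q γ : ℂ) else 0) := by
    intro C
    rw [aOrb, Finset.sum_filter, Finset.mul_sum]
    apply Finset.sum_congr rfl
    intro D _
    rw [mul_ite, mul_zero]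
    split_ifs with h <;> rfl
  rw [Finset.sum_congr rfl (fun C _ => h1 C), Finset.sum_comm]
  apply Finset.sum_congr rfl
  intro D hD
  have h2 : ∀ C ∈ CHF α,
      (if (∃ δ : Γ, D = actHom ρ δ '' C) then
          ((aOrb α ρ C).card : ℂ)⁻¹ * (chamberChar ρ D q γ : ℂ) else 0)
      = (if (∃ δ : Γ, C = actHom ρ δ '' D) then
          ((aOrb α ρ D).card : ℂ)⁻¹ * (chamberChar ρ D q γ : ℂ) else 0) := by
    intro C _
    by_cases h : ∃ δ : Γ, D = actHom ρ δ '' C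
    · rw [if_pos h, if_pos ((orb_symm ρ).1 h), aOrb_eq_of_mem α ρ h]
    · rw [if_neg h, if_neg (fun h' => h ((orb_symm ρ).1 h'))]
  rw [Finset.sum_congr rfl h2, ← Finset.sum_filter]
  have hfilter : (CHF α).filter (fun C => ∃ δ : Γ, C = actHom ρ δ '' D) = aOrb α ρ D := by
    ext E
    rw [Finset.mem_filter, mem_aOrb]
  rw [hfilter, Finset.sum_const, nsmul_eq_mul]
  have hDmem : D ∈ aOrb α ρ D := (mem_aOrb α ρ).2 ⟨hD, 1, (aImg_one ρ D).symm⟩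
  have hne : ((aOrb α ρ D).card : ℂ) ≠ 0 :=
    Nat.cast_ne_zero.2 (Finset.card_ne_zero_of_mem hDmem)
  rw [mul_inv_cancel_left₀ hne]

lemma part2_sum {k : ℕ} (Cr : Fin k → Set (Torus ℓ))
    (hrep : ∀ C : Set (Torus ℓ), IsChamberT α C →
      ∃! i : Fin k, ∃ δ : Γ, C = actHom ρ δ '' (Cr i)) (γ : Γ) :
    ∑ i : Fin k, ∑ D ∈ aOrb α ρ (Cr i), (chamberChar ρ D q γ : ℂ)
      = ∑ D ∈ CHF α, (chamberChar ρ D q γ : ℂ) := by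
  rcases Nat.eq_zero_or_pos k with hk | hk
  · subst hk
    have hempty : CHF α = ∅ := by
      apply Finset.eq_empty_of_forall_notMem
      intro C hC
      obtain ⟨i, -⟩ := (hrep C ((mem_CHF α).1 hC)).exists
      exact i.elim0
    simp [hempty]
  · have hne : Nonempty (Fin k) := ⟨⟨0, hk⟩⟩
    set g : Set (Torus ℓ) → Fin k := fun D =>
      if h : IsChamberT α D then (hrep D h).exists.choose else Classical.arbitrary _ with hg
    have hmaps : ∀ D ∈ CHF α, g D ∈ (Finset.univ : Finset (Fin k)) :=
      fun _ _ => Finset.mem_univ _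
    rw [← Finset.sum_fiberwise_of_maps_to hmaps (fun D => (chamberChar ρ D q γ : ℂ))]
    apply Finset.sum_congr rfl
    intro i _
    apply Finset.sum_congr
    · ext D
      rw [mem_aOrb, Finset.mem_filter]
      constructor
      · rintro ⟨hD, horb⟩
        refine ⟨hD, ?_⟩
        have hch := (mem_CHF α).1 hD
        show g D = i
        simp only [hg]
        rw [dif_pos hch]
        exact ExistsUnique.unique (hrep D hch) (hrep D hch).exists.choose_spec horb
      · rintro ⟨hD, hgD⟩
        refine ⟨hD, ?_⟩
        have hch := (mem_CHF α).1 hD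
        have hspec := (hrep D hch).exists.choose_spec
        have hgD' : (hrep D hch).exists.choose = i := by
          have : g D = i := hgD
          simp only [hg] at this
          rwa [dif_pos hch] at this
        rw [← hgD']
        exact hspec
    · intros; rfl

end

/-- Let `A` be a nonempty `Γ`-invariant central hyperplane arrangement over
`L = ℤ^ℓ`.  For every `q ∈ ℤ_{>0}`,
`χ_{A,q} = Σ_{C ∈ C_T} (1/#Γ(C)) · Ind_{Γ_C}^Γ χ_{C,q} = Σ_{i=1}^k Ind_{Γ_{C_i}}^Γ χ_{C_i,q}`,
where `Γ(C)` is the `Γ`-orbit of the chamber `C` and `{C_1,…,C_k}` is any set of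
representatives of the `Γ`-orbits of `C_T`. -/
theorem stmt_13 {ℓ n : ℕ} (hn : 0 < n) {Γ : Type*} [Group Γ] [Fintype Γ]
    (ρ : Γ →* Matrix.GeneralLinearGroup (Fin ℓ) ℤ)
    (hρ : Function.Injective ρ)
    (α : Fin n → Fin ℓ → ℤ)
    (hinv : ∀ (γ : Γ) (i : Fin n), ∃ j : Fin n,
      ((↑(ρ γ)⁻¹ : Matrix (Fin ℓ) (Fin ℓ) ℤ) *ᵥ α i = α j) ∨
      ((↑(ρ γ)⁻¹ : Matrix (Fin ℓ) (Fin ℓ) ℤ) *ᵥ α i = -α j))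
    (q : ℕ) (hq : 0 < q) :
    (∀ γ : Γ,
      (Nat.card {x : Fin ℓ → ZMod q //
          (∀ i : Fin n, x ⬝ᵥ (fun j => ((α i j : ℤ) : ZMod q)) ≠ 0) ∧
          x ᵥ* (((ρ γ : Matrix (Fin ℓ) (Fin ℓ) ℤ)).map (Int.cast : ℤ → ZMod q)) = x} : ℂ) =
        ∑ᶠ C ∈ {C : Set (Torus ℓ) | IsChamberT α C},
          ((Nat.card {D : Set (Torus ℓ) // ∃ δ : Γ, D = tAct (realMat ρ δ) C} : ℂ))⁻¹ *
            indCharVal ρ C q γ) ∧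
    (∀ (k : ℕ) (Cr : Fin k → Set (Torus ℓ)),
      (∀ i, IsChamberT α (Cr i)) →
      (∀ C : Set (Torus ℓ), IsChamberT α C →
        ∃! i : Fin k, ∃ δ : Γ, C = tAct (realMat ρ δ) (Cr i)) →
      ∀ γ : Γ,
        (Nat.card {x : Fin ℓ → ZMod q //
            (∀ i : Fin n, x ⬝ᵥ (fun j => ((α i j : ℤ) : ZMod q)) ≠ 0) ∧
            x ᵥ* (((ρ γ : Matrix (Fin ℓ) (Fin ℓ) ℤ)).map (Int.cast : ℤ → ZMod q)) = x} : ℂ) =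
          ∑ i : Fin k, indCharVal ρ (Cr i) q γ) := by
  haveI : NeZero q := ⟨hq.ne'⟩
  have hset : {C : Set (Torus ℓ) | IsChamberT α C} = ↑(CHF α) := by
    ext C; rw [Set.mem_setOf_eq, Finset.mem_coe, mem_CHF]
  constructor
  · intro γ
    have hL : Nat.card {x : Fin ℓ → ZMod q //
        (∀ i : Fin n, x ⬝ᵥ (fun j => ((α i j : ℤ) : ZMod q)) ≠ 0) ∧
        x ᵥ* (((ρ γ : Matrix (Fin ℓ) (Fin ℓ) ℤ)).map (Int.cast : ℤ → ZMod q)) = x}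
        = ∑ C ∈ CHF α, chamberChar ρ C q γ := by
      rw [card_S_eq α ρ q γ, card_X_sum α ρ q γ]
    rw [hL, hset, finsum_mem_coe_finset]
    have hR : ∑ C ∈ CHF α,
        ((Nat.card {D : Set (Torus ℓ) // ∃ δ : Γ, D = tAct (realMat ρ δ) C} : ℂ))⁻¹ *
          indCharVal ρ C q γ
        = ∑ C ∈ CHF α, ((aOrb α ρ C).card : ℂ)⁻¹ *
            (∑ D ∈ aOrb α ρ C, (chamberChar ρ D q γ : ℂ)) :=
      Finset.sum_congr rfl (fun C hC => by
        rw [card_orbit α ρ hinv ((mem_CHF α).1 hC), K1 α ρ q hinv ((mem_CHF α).1 hC) γ])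
    rw [hR, part1_sum α ρ q γ]
    push_cast
    rfl
  · intro k Cr hCr huniq γ
    have hrep' : ∀ C : Set (Torus ℓ), IsChamberT α C →
        ∃! i : Fin k, ∃ δ : Γ, C = actHom ρ δ '' (Cr i) := by
      intro C hC
      have h := huniq C hC
      simp only [tAct_eq] at h
      exact h
    have hL : Nat.card {x : Fin ℓ → ZMod q //
        (∀ i : Fin n, x ⬝ᵥ (fun j => ((α i j : ℤ) : ZMod q)) ≠ 0) ∧
        x ᵥ* (((ρ γ : Matrix (Fin ℓ) (Fin ℓ) ℤ)).map (Int.cast : ℤ → ZMod q)) = x}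
        = ∑ C ∈ CHF α, chamberChar ρ C q γ := by
      rw [card_S_eq α ρ q γ, card_X_sum α ρ q γ]
    rw [hL]
    have hR : ∑ i : Fin k, indCharVal ρ (Cr i) q γ
        = ∑ i : Fin k, ∑ D ∈ aOrb α ρ (Cr i), (chamberChar ρ D q γ : ℂ) :=
      Finset.sum_congr rfl (fun i _ => K1 α ρ q hinv (hCr i) γ)
    rw [hR, part2_sum α ρ q Cr hrep' γ]
    push_cast
    rfl
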